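/- The linear map M_F : ℝ^15 → ℝ^15 defined below has rank exactly 11. -/

import Mathlib

noncomputable section

/-- The coefficient matrix `M_F` of the type-F divergence system:
rows are `d47,…,d61`, columns are `c54,…,c68`. -/
def MF : Matrix (Fin 15) (Fin 15) ℝ :=
  !![0, 0, 0, 1, 1, 0, 0, 0, 0, 2, 0, 0, 0, 0, 0;
    0, 0, 1, 1, 0, 0, 0, 0, 0, 0, 0, 0, 0, 1, 0;
    0, 0, 0, 1, 0, 1, 0, 0, 0, 0, 0, 0, 1, 0, 0;
    0, 0, 0, 0, 1, 0, 0, 0, 1, 0, 0, 0, 0, 1, 0;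
    0, 1, 0, 0, 1, 0, 0, 0, 0, 0, 0, 0, 1, 0, 0;
    0, 0, 0, 0, 0, 1, 0, 0, 1, 0, 1, 0, 0, 0, 0;
    0, 1, 0, 0, 0, 1, 0, 0, 0, 0, 0, 2, 0, 0, 0;
    1, 0, 0, 0, 0, 0, 1, 0, 0, 0, 0, 0, 1, 0, 0;
    0, 0, 0, 0, 0, 0, 1, 1, 0, 0, 1, 0, 0, 0, 0;
    0, 0, 0, 0, 0, 0, 1, 0, 0, 0, 0, 1, 0, 0, 0;
    1, 0, 0, 0, 0, 0, 0, 1, 0, 0, 0, 0, 0, 1, 0;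
    0, 0, 0, 0, 0, 0, 0, 1, 0, 0, 0, 0, 0, 0, 1;
    0, 0, 1, 0, 0, 0, 0, 0, 1, 0, 0, 0, 0, 0, 2;
    1, 0, 0, 0, 0, 0, 0, 0, 0, 1, 0, 0, 0, 0, 0;
    0, 1, 1, 0, 0, 0, 0, 0, 0, 0, 1, 0, 0, 0, 0]

/-- Integer version of `MF`. -/
def MZaux : Matrix (Fin 15) (Fin 15) ℤ :=
  !![0, 0, 0, 1, 1, 0, 0, 0, 0, 2, 0, 0, 0, 0, 0;
    0, 0, 1, 1, 0, 0, 0, 0, 0, 0, 0, 0, 0, 1, 0;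
    0, 0, 0, 1, 0, 1, 0, 0, 0, 0, 0, 0, 1, 0, 0;
    0, 0, 0, 0, 1, 0, 0, 0, 1, 0, 0, 0, 0, 1, 0;
    0, 1, 0, 0, 1, 0, 0, 0, 0, 0, 0, 0, 1, 0, 0;
    0, 0, 0, 0, 0, 1, 0, 0, 1, 0, 1, 0, 0, 0, 0;
    0, 1, 0, 0, 0, 1, 0, 0, 0, 0, 0, 2, 0, 0, 0;
    1, 0, 0, 0, 0, 0, 1, 0, 0, 0, 0, 0, 1, 0, 0;
    0, 0, 0, 0, 0, 0, 1, 1, 0, 0, 1, 0, 0, 0, 0;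
    0, 0, 0, 0, 0, 0, 1, 0, 0, 0, 0, 1, 0, 0, 0;
    1, 0, 0, 0, 0, 0, 0, 1, 0, 0, 0, 0, 0, 1, 0;
    0, 0, 0, 0, 0, 0, 0, 1, 0, 0, 0, 0, 0, 0, 1;
    0, 0, 1, 0, 0, 0, 0, 0, 1, 0, 0, 0, 0, 0, 2;
    1, 0, 0, 0, 0, 0, 0, 0, 0, 1, 0, 0, 0, 0, 0;
    0, 1, 1, 0, 0, 0, 0, 0, 0, 0, 1, 0, 0, 0, 0]

/-- Column-basis factor. -/
def CZaux : Matrix (Fin 15) (Fin 11) ℤ :=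
  !![0, 0, 0, 1, 1, 0, 0, 0, 2, 0, 0;
    0, 0, 1, 1, 0, 0, 0, 0, 0, 0, 0;
    0, 0, 0, 1, 0, 1, 0, 0, 0, 0, 0;
    0, 0, 0, 0, 1, 0, 0, 0, 0, 0, 0;
    0, 1, 0, 0, 1, 0, 0, 0, 0, 0, 0;
    0, 0, 0, 0, 0, 1, 0, 0, 0, 1, 0;
    0, 1, 0, 0, 0, 1, 0, 0, 0, 0, 2;
    1, 0, 0, 0, 0, 0, 1, 0, 0, 0, 0;
    0, 0, 0, 0, 0, 0, 1, 1, 0, 1, 0;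
    0, 0, 0, 0, 0, 0, 1, 0, 0, 0, 1;
    1, 0, 0, 0, 0, 0, 0, 1, 0, 0, 0;
    0, 0, 0, 0, 0, 0, 0, 1, 0, 0, 0;
    0, 0, 1, 0, 0, 0, 0, 0, 0, 0, 0;
    1, 0, 0, 0, 0, 0, 0, 0, 1, 0, 0;
    0, 1, 1, 0, 0, 0, 0, 0, 0, 1, 0]

/-- Row-reduced factor. -/
def DZaux : Matrix (Fin 11) (Fin 15) ℤ :=
  !![1, 0, 0, 0, 0, 0, 0, 0, 0, 0, 0, 0, 0, 1, -1;
    0, 1, 0, 0, 0, 0, 0, 0, -1, 0, 0, 0, 1, -1, 0;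
    0, 0, 1, 0, 0, 0, 0, 0, 1, 0, 0, 0, 0, 0, 2;
    0, 0, 0, 1, 0, 0, 0, 0, -1, 0, 0, 0, 0, 1, -2;
    0, 0, 0, 0, 1, 0, 0, 0, 1, 0, 0, 0, 0, 1, 0;
    0, 0, 0, 0, 0, 1, 0, 0, 1, 0, 0, 0, 1, -1, 2;
    0, 0, 0, 0, 0, 0, 1, 0, 0, 0, 0, 0, 1, -1, 1;
    0, 0, 0, 0, 0, 0, 0, 1, 0, 0, 0, 0, 0, 0, 1;
    0, 0, 0, 0, 0, 0, 0, 0, 0, 1, 0, 0, 0, -1, 1;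
    0, 0, 0, 0, 0, 0, 0, 0, 0, 0, 1, 0, -1, 1, -2;
    0, 0, 0, 0, 0, 0, 0, 0, 0, 0, 0, 1, -1, 1, -1]

/-- Row selector. -/
def AZaux : Matrix (Fin 11) (Fin 15) ℤ :=
  !![1, 0, 0, 0, 0, 0, 0, 0, 0, 0, 0, 0, 0, 0, 0;
    0, 1, 0, 0, 0, 0, 0, 0, 0, 0, 0, 0, 0, 0, 0;
    0, 0, 1, 0, 0, 0, 0, 0, 0, 0, 0, 0, 0, 0, 0;
    0, 0, 0, 1, 0, 0, 0, 0, 0, 0, 0, 0, 0, 0, 0;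
    0, 0, 0, 0, 1, 0, 0, 0, 0, 0, 0, 0, 0, 0, 0;
    0, 0, 0, 0, 0, 1, 0, 0, 0, 0, 0, 0, 0, 0, 0;
    0, 0, 0, 0, 0, 0, 1, 0, 0, 0, 0, 0, 0, 0, 0;
    0, 0, 0, 0, 0, 0, 0, 1, 0, 0, 0, 0, 0, 0, 0;
    0, 0, 0, 0, 0, 0, 0, 0, 1, 0, 0, 0, 0, 0, 0;
    0, 0, 0, 0, 0, 0, 0, 0, 0, 1, 0, 0, 0, 0, 0;
    0, 0, 0, 0, 0, 0, 0, 0, 0, 0, 0, 1, 0, 0, 0]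

/-- Twice the right-inverse factor (to stay integral). -/
def BZaux : Matrix (Fin 15) (Fin 11) ℤ :=
  !![0, 0, 0, 2, -2, -2, 2, 2, 2, -4, -2;
    0, 0, 0, -2, 2, 0, 0, 0, 0, 0, 0;
    0, 2, -2, -2, 2, 4, -2, 0, -4, 4, 4;
    0, 0, 2, 2, -2, -4, 2, 0, 4, -4, -4;
    0, 0, 0, 2, 0, 0, 0, 0, 0, 0, 0;
    0, 0, 0, -2, 2, 4, -2, 0, -4, 4, 4;
    0, 0, 0, -2, 2, 2, -2, 0, -2, 4, 2;
    0, 0, 0, 0, 0, 0, 0, 0, 0, 0, 2;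
    0, 0, 0, 0, 0, 0, 0, 0, 0, 0, 0;
    1, 0, -1, -2, 1, 2, -1, 0, -2, 2, 2;
    0, 0, 0, 2, -2, -2, 2, 0, 4, -4, -4;
    0, 0, 0, 2, -2, -2, 2, 0, 2, -2, -2;
    0, 0, 0, 0, 0, 0, 0, 0, 0, 0, 0;
    0, 0, 0, 0, 0, 0, 0, 0, 0, 0, 0;
    0, 0, 0, 0, 0, 0, 0, 0, 0, 0, 0]

theorem MFaux_cast : MF = MZaux.map (Int.castRingHom ℝ) := by
  rw [← Matrix.ext_iff]
  simp only [MF, MZaux, Fin.forall_fin_succ, Matrix.map_apply, Matrix.cons_val_zero,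
    Matrix.cons_val_succ, Matrix.of_apply, Fin.forall_fin_zero_pi]
  norm_num

theorem CDaux : CZaux * DZaux = MZaux := by
  have h : ∀ i, (CZaux * DZaux) i = MZaux i := by
    intro i; fin_cases i <;> decide
  funext i; exact h i

/-- The selected 11 rows of `MZaux`. -/
def SZaux : Matrix (Fin 11) (Fin 15) ℤ :=
  !![0, 0, 0, 1, 1, 0, 0, 0, 0, 2, 0, 0, 0, 0, 0;
    0, 0, 1, 1, 0, 0, 0, 0, 0, 0, 0, 0, 0, 1, 0;
    0, 0, 0, 1, 0, 1, 0, 0, 0, 0, 0, 0, 1, 0, 0;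
    0, 0, 0, 0, 1, 0, 0, 0, 1, 0, 0, 0, 0, 1, 0;
    0, 1, 0, 0, 1, 0, 0, 0, 0, 0, 0, 0, 1, 0, 0;
    0, 0, 0, 0, 0, 1, 0, 0, 1, 0, 1, 0, 0, 0, 0;
    0, 1, 0, 0, 0, 1, 0, 0, 0, 0, 0, 2, 0, 0, 0;
    1, 0, 0, 0, 0, 0, 1, 0, 0, 0, 0, 0, 1, 0, 0;
    0, 0, 0, 0, 0, 0, 1, 1, 0, 0, 1, 0, 0, 0, 0;
    0, 0, 0, 0, 0, 0, 1, 0, 0, 0, 0, 1, 0, 0, 0;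
    0, 0, 0, 0, 0, 0, 0, 1, 0, 0, 0, 0, 0, 0, 1]

theorem AMaux : AZaux * MZaux = SZaux := by
  have h : ∀ i, (AZaux * MZaux) i = SZaux i := by
    intro i; fin_cases i <;> decide
  funext i; exact h i

theorem SBaux : SZaux * BZaux = Matrix.diagonal (fun _ => 2) := by
  have h : ∀ i, (SZaux * BZaux) i = Matrix.diagonal (fun _ => (2:ℤ)) i := by
    intro i; fin_cases i <;> decide
  funext i; exact h i

theorem ABaux : AZaux * MZaux * BZaux = Matrix.diagonal (fun _ => 2) := by
  rw [AMaux, SBaux]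

/-- The linear map `M_F : ℝ^15 → ℝ^15` has rank exactly 11. -/
theorem MF_rank_eq_11 : MF.rank = 11 := by
  apply le_antisymm
  · have h : MF = CZaux.map (Int.castRingHom ℝ) * DZaux.map (Int.castRingHom ℝ) := by
      rw [MFaux_cast, ← CDaux, Matrix.map_mul]
    calc MF.rank ≤ (DZaux.map (Int.castRingHom ℝ)).rank := by
          rw [h]; exact Matrix.rank_mul_le_right _ _
      _ ≤ 11 := by
          simpa using Matrix.rank_le_card_height (DZaux.map (Int.castRingHom ℝ))
  · have h : (AZaux.map (Int.castRingHom ℝ)) * MF * (BZaux.map (Int.castRingHom ℝ)) =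
        Matrix.diagonal (fun _ => (2 : ℝ)) := by
      rw [MFaux_cast, ← Matrix.map_mul, ← Matrix.map_mul, ABaux,
        Matrix.diagonal_map (by simp)]
      norm_num
    have hu : IsUnit (Matrix.diagonal (fun _ : Fin 11 => (2 : ℝ))) := by
      rw [Matrix.isUnit_diagonal]
      exact IsUnit.of_mul_eq_one (fun _ => (2:ℝ)⁻¹) (by funext i; norm_num)
    calc (11 : ℕ) = (Matrix.diagonal (fun _ : Fin 11 => (2 : ℝ))).rank := by
          rw [Matrix.rank_of_isUnit _ hu, Fintype.card_fin]
      _ = ((AZaux.map (Int.castRingHom ℝ)) * MF * (BZaux.map (Int.castRingHom ℝ))).rank := by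
          rw [h]
      _ ≤ ((AZaux.map (Int.castRingHom ℝ)) * MF).rank := Matrix.rank_mul_le_left _ _
      _ ≤ MF.rank := Matrix.rank_mul_le_right _ _
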